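/- If X is a β-saturated fuzzy cycle on n vertices in which every β-strong edge has weight w, then the strong domination index of X equals n · ⌈n/3⌉ · w. -/

import Mathlib

open Finset

/-- A fuzzy graph on vertex type `V`. -/
structure FuzzyGraph (V : Type*) where
  ρ : V → ℝ
  υ : V → V → ℝ
  ρ_nonneg : ∀ a, 0 ≤ ρ a
  ρ_le_one : ∀ a, ρ a ≤ 1
  υ_nonneg : ∀ a b, 0 ≤ υ a b
  symm : ∀ a b, υ a b = υ b a
  υ_le : ∀ a b, υ a b ≤ min (ρ a) (ρ b)
  loopless : ∀ a, υ a a = 0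

namespace FuzzyGraph

variable {V : Type*} [Fintype V] [DecidableEq V]

/-- Strength of a path given by its list of successive vertices:
the minimum of the weights of its edges. -/
def pathStrength (X : FuzzyGraph V) : List V → ℝ
  | [] => 0
  | [_] => 0
  | [a, b] => X.υ a b
  | a :: b :: c :: l => min (X.υ a b) (X.pathStrength (b :: c :: l))

/-- `l` is a path from `a` to `b` : distinct vertices joined by positive-weight edges. -/
def IsPath (X : FuzzyGraph V) (a b : V) (l : List V) : Prop :=
  l.Nodup ∧ l.head? = some a ∧ l.getLast? = some b ∧ 2 ≤ l.length ∧
    l.Chain' (fun x y => 0 < X.υ x y)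

/-- Strength of connectedness between two vertices: maximum strength of a path. -/
noncomputable def conn (X : FuzzyGraph V) (a b : V) : ℝ :=
  sSup {s | ∃ l : List V, X.IsPath a b l ∧ s = X.pathStrength l}

/-- Delete the edge `ab` (set its weight to `0`). -/
def deleteEdge (X : FuzzyGraph V) (a b : V) : FuzzyGraph V where
  ρ := X.ρ
  υ x y := if (x = a ∧ y = b) ∨ (x = b ∧ y = a) then 0 else X.υ x y
  ρ_nonneg := X.ρ_nonneg
  ρ_le_one := X.ρ_le_one
  υ_nonneg := by
    intro x y; try dsimp only
    split_ifs
    · exact le_rfl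
    · exact X.υ_nonneg x y
  symm := by
    intro x y; try dsimp only
    by_cases h : (x = a ∧ y = b) ∨ (x = b ∧ y = a)
    · rw [if_pos h, if_pos (by tauto)]
    · rw [if_neg h, if_neg (by tauto), X.symm]
  υ_le := by
    intro x y; try dsimp only
    split_ifs
    · exact le_min (X.ρ_nonneg x) (X.ρ_nonneg y)
    · exact X.υ_le x y
  loopless := by
    intro x; try dsimp only
    split_ifs
    · rfl
    · exact X.loopless x

/-- `ab` is a strong edge (α- or β-strong). -/
def StrongEdge (X : FuzzyGraph V) (a b : V) : Prop :=
  0 < X.υ a b ∧ (X.deleteEdge a b).conn a b ≤ X.υ a b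

/-- `ab` is an α-strong edge. -/
def AlphaStrong (X : FuzzyGraph V) (a b : V) : Prop :=
  0 < X.υ a b ∧ (X.deleteEdge a b).conn a b < X.υ a b

/-- `ab` is a β-strong edge. -/
def BetaStrong (X : FuzzyGraph V) (a b : V) : Prop :=
  0 < X.υ a b ∧ X.υ a b = (X.deleteEdge a b).conn a b

/-- `ab` is a δ-edge. -/
def DeltaEdge (X : FuzzyGraph V) (a b : V) : Prop :=
  0 < X.υ a b ∧ X.υ a b < (X.deleteEdge a b).conn a b

/-- The minimum weight of a strong edge incident at `a`. -/
noncomputable def minInc (X : FuzzyGraph V) (a : V) : ℝ :=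
  sInf {w | ∃ b, X.StrongEdge a b ∧ w = X.υ a b}

/-- The weight of a set of vertices. -/
noncomputable def weight (X : FuzzyGraph V) (S : Finset V) : ℝ :=
  ∑ a ∈ S, X.minInc a

/-- `D` is a strong dominating set. -/
def IsSDS (X : FuzzyGraph V) (D : Finset V) : Prop :=
  ∀ v, v ∉ D → ∃ a ∈ D, X.StrongEdge a v

/-- `D` is a minimal strong dominating set. -/
def IsMinimalSDS (X : FuzzyGraph V) (D : Finset V) : Prop :=
  X.IsSDS D ∧ ∀ a ∈ D, ¬ X.IsSDS (D.erase a)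

/-- `D` is a minimum (least weight) strong dominating set. -/
def IsMinimumSDS (X : FuzzyGraph V) (D : Finset V) : Prop :=
  X.IsSDS D ∧ ∀ D' : Finset V, X.IsSDS D' → X.weight D ≤ X.weight D'

/-- The strong domination degree of a vertex. -/
noncomputable def sd (X : FuzzyGraph V) (u : V) : ℝ :=
  sInf {w | ∃ D : Finset V, X.IsMinimalSDS D ∧ u ∈ D ∧ w = X.weight D}

/-- The strong domination number. -/
noncomputable def gammaS (X : FuzzyGraph V) : ℝ :=
  sInf {w | ∃ D : Finset V, X.IsSDS D ∧ w = X.weight D}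

/-- The upper strong domination number. -/
noncomputable def GammaS (X : FuzzyGraph V) : ℝ :=
  sSup {w | ∃ D : Finset V, X.IsMinimalSDS D ∧ w = X.weight D}

/-- The strong domination index. -/
noncomputable def SDI (X : FuzzyGraph V) : ℝ := ∑ u : V, X.sd u

/-- `X` is connected. -/
def Connected (X : FuzzyGraph V) : Prop := ∀ a b : V, a ≠ b → ∃ l, X.IsPath a b l

/-- `X` is a strong fuzzy graph: every edge is strong. -/
def IsStrongFG (X : FuzzyGraph V) : Prop := ∀ a b, 0 < X.υ a b → X.StrongEdge a b

/-- Underlying (support) simple graph. -/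
def support (X : FuzzyGraph V) : SimpleGraph V where
  Adj a b := 0 < X.υ a b
  symm := ⟨fun a b (h : 0 < X.υ a b) => show 0 < X.υ b a by rw [X.symm]; exact h⟩
  loopless := ⟨fun a (h : 0 < X.υ a a) => by rw [X.loopless] at h; exact lt_irrefl 0 h⟩

/-- `X` is a fuzzy tree. -/
def IsFuzzyTree (X : FuzzyGraph V) : Prop :=
  ∃ F : FuzzyGraph V, F.ρ = X.ρ ∧ (∀ a b, F.υ a b = X.υ a b ∨ F.υ a b = 0) ∧
    F.support.IsTree ∧ ∀ a b, 0 < X.υ a b → F.υ a b = 0 → X.υ a b < F.conn a b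

/-- The size of a fuzzy graph: the sum of all edge weights. -/
noncomputable def size (X : FuzzyGraph V) : ℝ := (∑ a : V, ∑ b : V, X.υ a b) / 2

/-- The underlying graph of `X` is a cycle. -/
def IsCycleGraph (X : FuzzyGraph V) : Prop :=
  ∃ n : ℕ, 3 ≤ n ∧ ∃ f : ZMod n ≃ V,
    ∀ x y : V, 0 < X.υ x y ↔ ∃ i : ZMod n, (x = f i ∧ y = f (i + 1)) ∨ (x = f (i + 1) ∧ y = f i)

/-- `X` is a fuzzy cycle: a cycle with at least two edges of minimum weight. -/
def IsFuzzyCycle (X : FuzzyGraph V) : Prop :=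
  X.IsCycleGraph ∧ ∃ a b c d : V, 0 < X.υ a b ∧ 0 < X.υ c d ∧
    Sym2.mk (a, b) ≠ Sym2.mk (c, d) ∧ X.υ a b = X.υ c d ∧
    ∀ x y, 0 < X.υ x y → X.υ a b ≤ X.υ x y

/-- A set of pairwise fuzzy independent vertices. -/
def IsFuzzyIndep (X : FuzzyGraph V) (S : Finset V) : Prop :=
  ∀ a ∈ S, ∀ b ∈ S, a ≠ b → ¬ X.StrongEdge a b

/-- The strong independent domination number. -/
noncomputable def iS (X : FuzzyGraph V) : ℝ :=
  sInf {w | ∃ D : Finset V, X.IsSDS D ∧ X.IsFuzzyIndep D ∧ w = X.weight D}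

/-- The strong independence number. -/
noncomputable def betaS (X : FuzzyGraph V) : ℝ :=
  sSup {w | ∃ S : Finset V, X.IsFuzzyIndep S ∧ w = X.weight S}

/-- Closed strong neighborhood. -/
def closedNbhd (X : FuzzyGraph V) (a : V) : Set V := insert a {b | X.StrongEdge a b}

/-- Open strong neighborhood. -/
def openNbhd (X : FuzzyGraph V) (a : V) : Set V := {b | X.StrongEdge a b}

/-- Private neighborhood of `a` with respect to `S`. -/
def privNbhd (X : FuzzyGraph V) (a : V) (S : Finset V) : Set V :=
  X.closedNbhd a \ ⋃ b ∈ S.erase a, X.closedNbhd b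

/-- `S` is a fuzzy irredundant set. -/
def IsIrredundant (X : FuzzyGraph V) (S : Finset V) : Prop :=
  ∀ a ∈ S, (X.privNbhd a S).Nonempty

/-- `S` is a maximal fuzzy irredundant set. -/
def IsMaximalIrredundant (X : FuzzyGraph V) (S : Finset V) : Prop :=
  X.IsIrredundant S ∧ ∀ v ∉ S, ¬ X.IsIrredundant (insert v S)

/-- The strong irredundance number. -/
noncomputable def irS (X : FuzzyGraph V) : ℝ :=
  sInf {w | ∃ S : Finset V, X.IsMaximalIrredundant S ∧ w = X.weight S}

end FuzzyGraph
set_option linter.unusedSectionVars false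

namespace FuzzyGraph

variable {V : Type*} [Fintype V] [DecidableEq V]

lemma ext' {X Y : FuzzyGraph V} (h1 : X.ρ = Y.ρ) (h2 : X.υ = Y.υ) : X = Y := by
  cases X; cases Y; simp_all

lemma deleteEdge_comm (X : FuzzyGraph V) (a b : V) :
    X.deleteEdge a b = X.deleteEdge b a := by
  refine ext' rfl ?_
  funext x y
  simp only [deleteEdge]
  exact if_congr or_comm rfl rfl

lemma deleteEdge_υ_of_ne (X : FuzzyGraph V) {a b x y : V}
    (h : ¬((x = a ∧ y = b) ∨ (x = b ∧ y = a))) :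
    (X.deleteEdge a b).υ x y = X.υ x y := if_neg h

lemma deleteEdge_υ_pos {X : FuzzyGraph V} {a b x y : V}
    (h : 0 < (X.deleteEdge a b).υ x y) :
    0 < X.υ x y ∧ ¬((x = a ∧ y = b) ∨ (x = b ∧ y = a)) := by
  by_cases hc : (x = a ∧ y = b) ∨ (x = b ∧ y = a)
  · rw [show (X.deleteEdge a b).υ x y = 0 from if_pos hc] at h
    exact absurd h (lt_irrefl 0)
  · rw [X.deleteEdge_υ_of_ne hc] at h
    exact ⟨h, hc⟩

lemma pathStrength_le (X : FuzzyGraph V) :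
    ∀ (l : List V) (s : ℕ) (h : s + 1 < l.length),
      X.pathStrength l ≤ X.υ (l[s]'(by omega)) (l[s+1]'h)
  | [], s, h => by simp at h
  | [a], s, h => by simp at h
  | [a, b], s, h => by
      simp only [List.length_cons, List.length_nil] at h
      have hs : s = 0 := by omega
      subst hs
      simp [pathStrength]
  | a :: b :: c :: l, s, h => by
      match s with
      | 0 => exact min_le_left _ _
      | Nat.succ t =>
          have h' : t + 1 < (b :: c :: l).length := by
            simpa using Nat.lt_of_succ_lt_succ h
          calc X.pathStrength (a :: b :: c :: l) ≤ X.pathStrength (b :: c :: l) :=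
                min_le_right _ _
            _ ≤ _ := X.pathStrength_le (b :: c :: l) t h'

lemma le_pathStrength (X : FuzzyGraph V) (c : ℝ) :
    ∀ (l : List V), 2 ≤ l.length →
      (∀ (s : ℕ) (h : s + 1 < l.length), c ≤ X.υ (l[s]'(by omega)) (l[s+1]'h)) →
      c ≤ X.pathStrength l
  | [], h2, _ => by simp at h2
  | [a], h2, _ => by simp at h2
  | [a, b], _, hall => by
      have := hall 0 (by simp)
      simpa [pathStrength] using this
  | a :: b :: d :: l, _, hall => by
      refine le_min (hall 0 (by simp [Nat.succ_lt_succ])) ?_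
      refine X.le_pathStrength c (b :: d :: l) (by simp) ?_
      intro s h
      have := hall (s+1) (by simpa using Nat.succ_lt_succ h)
      simpa using this

end FuzzyGraph

section ZModAux

lemma zmod_cast_inj {n : ℕ} [NeZero n] {s t : ℕ} (hs : s < n) (ht : t < n)
    (h : (s : ZMod n) = (t : ZMod n)) : s = t := by
  have h1 := ZMod.val_cast_of_lt hs
  have h2 := ZMod.val_cast_of_lt ht
  rw [← h1, ← h2, h]

lemma zmod_cast_pred {n : ℕ} (hn : 1 ≤ n) : ((n - 1 : ℕ) : ZMod n) = -1 := by
  have : ((n : ℕ) : ZMod n) = 0 := ZMod.natCast_self n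
  rw [Nat.cast_sub hn, this]
  ring

lemma zmod_two_ne_zero {n : ℕ} (hn : 3 ≤ n) : (2 : ZMod n) ≠ 0 := by
  have : NeZero n := ⟨by omega⟩
  intro h
  have : ((2 : ℕ) : ZMod n) = ((0 : ℕ) : ZMod n) := by push_cast; exact h
  have := zmod_cast_inj (by omega) (by omega) this
  omega

end ZModAux

section Arc

set_option linter.unusedSectionVars false

variable {V : Type*} [Fintype V] [DecidableEq V]

/-- The arc going backwards around the cycle from `f i` to `f (i+1)`. -/
def arcList {n : ℕ} (f : ZMod n ≃ V) (i : ZMod n) : List V :=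
  (List.range n).map (fun s : ℕ => f (i - (s : ZMod n)))

lemma arcList_length {n : ℕ} (f : ZMod n ≃ V) (i : ZMod n) :
    (arcList f i).length = n := by simp [arcList]

lemma arcList_getElem {n : ℕ} (f : ZMod n ≃ V) (i : ZMod n) (s : ℕ) (hs : s < n) :
    (arcList f i)[s]'(by simpa [arcList_length] using hs) = f (i - (s : ZMod n)) := by
  simp [arcList]

lemma arcList_nodup {n : ℕ} [NeZero n] (f : ZMod n ≃ V) (i : ZMod n) :
    (arcList f i).Nodup := by
  refine List.Nodup.map_on ?_ List.nodup_range
  intro s hs t ht h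
  simp only [List.mem_range] at hs ht
  have h2 : i - (s : ZMod n) = i - (t : ZMod n) := f.injective h
  have h3 : (s : ZMod n) = (t : ZMod n) := sub_right_injective h2
  exact zmod_cast_inj hs ht h3

lemma arcList_head? {n : ℕ} (hn : 1 ≤ n) (f : ZMod n ≃ V) (i : ZMod n) :
    (arcList f i).head? = some (f i) := by
  rw [List.head?_eq_getElem?, List.getElem?_eq_getElem (by simp [arcList_length]; omega)]
  rw [arcList_getElem f i 0 hn]
  simp

lemma arcList_getLast? {n : ℕ} (hn : 1 ≤ n) (f : ZMod n ≃ V) (i : ZMod n) :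
    (arcList f i).getLast? = some (f (i + 1)) := by
  rw [List.getLast?_eq_getElem?, arcList_length,
    List.getElem?_eq_getElem (by simp [arcList_length]; omega)]
  rw [arcList_getElem f i (n - 1) (by omega)]
  rw [zmod_cast_pred hn]
  ring_nf

end Arc

section Cycle

set_option linter.unusedSectionVars false

variable {V : Type*} [Fintype V] [DecidableEq V] {X : FuzzyGraph V} {n : ℕ}
  {f : ZMod n ≃ V}

lemma pair_ne_deleted (hn : 3 ≤ n) {i j : ZMod n} (hj : j ≠ i) (f : ZMod n ≃ V) :
    ¬((f (j + 1) = f i ∧ f j = f (i + 1)) ∨ (f (j + 1) = f (i + 1) ∧ f j = f i)) := by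
  rintro (⟨h1, h2⟩ | ⟨h1, h2⟩)
  · have e1 : j + 1 = i := f.injective h1
    have e2 : j = i + 1 := f.injective h2
    rw [← e1] at e2
    exact zmod_two_ne_zero hn (by linear_combination -e2)
  · exact hj (f.injective h2)

/-- Any consecutive pair in the arc is an edge of the deleted graph. -/
lemma arc_consec (hn : 3 ≤ n)
    (hf : ∀ x y, 0 < X.υ x y ↔ ∃ i : ZMod n, (x = f i ∧ y = f (i + 1)) ∨ (x = f (i + 1) ∧ y = f i))
    (i : ZMod n) (s : ℕ) (hs : s + 1 < n) :
    ∃ j : ZMod n, j ≠ i ∧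
      (arcList f i)[s]'(by simpa [arcList_length] using (by omega : s < n)) = f (j + 1) ∧
      (arcList f i)[s+1]'(by simpa [arcList_length] using hs) = f j ∧
      (X.deleteEdge (f i) (f (i + 1))).υ (f (j + 1)) (f j) = X.υ (f (j + 1)) (f j) ∧
      0 < X.υ (f (j + 1)) (f j) := by
  have : NeZero n := ⟨by omega⟩
  refine ⟨i - (s : ZMod n) - 1, ?_, ?_, ?_, ?_, ?_⟩
  · intro h
    have hs1 : (s : ZMod n) = -1 := by linear_combination -h
    rw [← zmod_cast_pred (by omega : 1 ≤ n)] at hs1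
    have := zmod_cast_inj (by omega) (by omega) hs1
    omega
  · rw [arcList_getElem f i s (by omega)]; ring_nf
  · rw [arcList_getElem f i (s+1) hs]; push_cast; ring_nf
  · refine X.deleteEdge_υ_of_ne (pair_ne_deleted hn ?_ f)
    intro h
    have hs1 : (s : ZMod n) = -1 := by linear_combination -h
    rw [← zmod_cast_pred (by omega : 1 ≤ n)] at hs1
    have := zmod_cast_inj (by omega) (by omega) hs1
    omega
  · exact (hf _ _).mpr ⟨i - (s : ZMod n) - 1, Or.inr ⟨rfl, rfl⟩⟩

lemma arc_isPath (hn : 3 ≤ n)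
    (hf : ∀ x y, 0 < X.υ x y ↔ ∃ i : ZMod n, (x = f i ∧ y = f (i + 1)) ∨ (x = f (i + 1) ∧ y = f i))
    (i : ZMod n) :
    (X.deleteEdge (f i) (f (i + 1))).IsPath (f i) (f (i + 1)) (arcList f i) := by
  have : NeZero n := ⟨by omega⟩
  refine ⟨arcList_nodup f i, arcList_head? (by omega) f i, arcList_getLast? (by omega) f i,
    by rw [arcList_length]; omega, ?_⟩
  refine List.isChain_iff_getElem.mpr ?_
  intro s hs
  rw [arcList_length] at hs
  obtain ⟨j, hj, h1, h2, h3, h4⟩ := arc_consec hn hf i s (by omega)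
  rw [show (arcList f i)[s] = f (j+1) from h1, show (arcList f i)[s+1] = f j from h2, h3]
  exact h4

lemma path_eq_arc (hn : 3 ≤ n)
    (hf : ∀ x y, 0 < X.υ x y ↔ ∃ i : ZMod n, (x = f i ∧ y = f (i + 1)) ∨ (x = f (i + 1) ∧ y = f i))
    (i : ZMod n) {l : List V}
    (hp : (X.deleteEdge (f i) (f (i + 1))).IsPath (f i) (f (i + 1)) l) :
    l = arcList f i := by
  have hNZ : NeZero n := ⟨by omega⟩
  obtain ⟨hnd, hhead, hlast, hlen, hchain⟩ := hp
  have hcard : Fintype.card V = n := by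
    rw [← Fintype.card_congr f, ZMod.card n]
  have hlen_le : l.length ≤ n := hcard ▸ hnd.length_le_card
  have hstep : ∀ s : ℕ, ∀ h : s + 1 < l.length,
      ∃ j : ZMod n, ¬((l[s]'(by omega) = f i ∧ l[s+1]'h = f (i+1)) ∨
          (l[s]'(by omega) = f (i+1) ∧ l[s+1]'h = f i)) ∧
        ((l[s]'(by omega) = f j ∧ l[s+1]'h = f (j+1)) ∨
          (l[s]'(by omega) = f (j+1) ∧ l[s+1]'h = f j)) := by
    intro s h
    have hc := List.isChain_iff_getElem.mp hchain s (by omega)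
    obtain ⟨hpos, hne⟩ := FuzzyGraph.deleteEdge_υ_pos hc
    obtain ⟨j, hj⟩ := (hf _ _).mp hpos
    exact ⟨j, hne, hj⟩
  have hget : ∀ s : ℕ, ∀ h : s < l.length, l[s] = f (i - (s : ZMod n)) := by
    intro s
    induction s using Nat.strong_induction_on with
    | _ s ih =>
      intro h
      match s with
      | 0 =>
        rw [List.head?_eq_getElem?, List.getElem?_eq_getElem h] at hhead
        simp only [Option.some.injEq] at hhead
        rw [hhead]
        norm_num
      | Nat.succ t =>
        have ht : t < l.length := by omega
        have hit := ih t (by omega) ht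
        obtain ⟨j, hne, hj⟩ := hstep t h
        rcases hj with ⟨h1, h2⟩ | ⟨h1, h2⟩
        · rw [h1] at hit
          have hji : j = i - (t : ZMod n) := f.injective hit
          exfalso
          rcases Nat.eq_zero_or_pos t with rfl | htpos
          · apply hne
            left
            refine ⟨?_, ?_⟩
            · rw [h1, hji]; norm_num
            · rw [h2]; congr 1; rw [hji]; push_cast; ring
          · obtain ⟨u, rfl⟩ : ∃ u, t = u + 1 := ⟨t - 1, by omega⟩
            have hu := ih u (by omega) (by omega)
            have hgeq : l.get ⟨u+1+1, h⟩ = l.get ⟨u, by omega⟩ := by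
              simp only [List.get_eq_getElem]
              rw [h2, hu]
              congr 1
              push_cast at hji ⊢
              linear_combination hji
            have := (hnd.get_inj_iff).mp hgeq
            simp only [Fin.mk.injEq] at this
            omega
        · rw [h1] at hit
          have hji : j + 1 = i - (t : ZMod n) := f.injective hit
          rw [h2]
          congr 1
          push_cast
          linear_combination hji
  have hlen_eq : l.length = n := by
    rw [List.getLast?_eq_getElem?, List.getElem?_eq_getElem (by omega)] at hlast
    simp only [Option.some.injEq] at hlast
    have hg := hget (l.length - 1) (by omega)
    rw [hlast] at hg
    have : i + 1 = i - ((l.length - 1 : ℕ) : ZMod n) := f.injective hg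
    have h2 : ((l.length - 1 : ℕ) : ZMod n) = ((n - 1 : ℕ) : ZMod n) := by
      rw [zmod_cast_pred (by omega : 1 ≤ n)]
      linear_combination this
    have := zmod_cast_inj (by omega) (by omega) h2
    omega
  refine List.ext_getElem (by rw [hlen_eq, arcList_length]) ?_
  intro s h1 h2
  rw [hget s h1, arcList_getElem f i s (by omega)]

lemma natCast_val_zmod {n : ℕ} [NeZero n] (x : ZMod n) : ((x.val : ℕ) : ZMod n) = x := by
  rw [ZMod.natCast_val, ZMod.cast_id]

lemma conn_deleteEdge (hn : 3 ≤ n)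
    (hf : ∀ x y, 0 < X.υ x y ↔ ∃ i : ZMod n, (x = f i ∧ y = f (i + 1)) ∨ (x = f (i + 1) ∧ y = f i))
    {a b c d : V} (hab : 0 < X.υ a b) (hcd : 0 < X.υ c d)
    (hne : s(a, b) ≠ s(c, d)) (habcd : X.υ a b = X.υ c d)
    (hmin : ∀ x y, 0 < X.υ x y → X.υ a b ≤ X.υ x y)
    (i : ZMod n) :
    (X.deleteEdge (f i) (f (i + 1))).conn (f i) (f (i + 1)) = X.υ a b := by
  have hNZ : NeZero n := ⟨by omega⟩
  set X' := X.deleteEdge (f i) (f (i + 1)) with hX'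
  have hS : {s | ∃ l, X'.IsPath (f i) (f (i+1)) l ∧ s = X'.pathStrength l}
      = {X'.pathStrength (arcList f i)} := by
    ext s
    simp only [Set.mem_setOf_eq, Set.mem_singleton_iff]
    constructor
    · rintro ⟨l, hl, rfl⟩
      rw [path_eq_arc hn hf i hl]
    · intro h
      exact ⟨arcList f i, arc_isPath hn hf i, h⟩
  have hconn : X'.conn (f i) (f (i+1)) = X'.pathStrength (arcList f i) := by
    rw [FuzzyGraph.conn, hS, csSup_singleton]
  rw [hconn]
  -- find a minimum edge with index ≠ i
  obtain ⟨ja, hja⟩ := (hf a b).mp hab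
  obtain ⟨jc, hjc⟩ := (hf c d).mp hcd
  have hj_ex : ∃ j : ZMod n, j ≠ i ∧ X.υ (f (j+1)) (f j) = X.υ a b := by
    by_cases hjai : ja = i
    · refine ⟨jc, ?_, ?_⟩
      · intro hjci
        apply hne
        subst hjai hjci
        rcases hja with ⟨rfl, rfl⟩ | ⟨rfl, rfl⟩ <;> rcases hjc with ⟨rfl, rfl⟩ | ⟨rfl, rfl⟩ <;>
          simp [Sym2.eq_swap]
      · rcases hjc with ⟨rfl, rfl⟩ | ⟨rfl, rfl⟩
        · rw [X.symm, ← habcd]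
        · rw [← habcd]
    · refine ⟨ja, hjai, ?_⟩
      rcases hja with ⟨rfl, rfl⟩ | ⟨rfl, rfl⟩
      · rw [X.symm]
      · rfl
  obtain ⟨j, hji, hjm⟩ := hj_ex
  apply le_antisymm
  · -- pathStrength ≤ m  via the edge at index j
    set s := (i - j - 1).val with hsdef
    have hs_cast : ((s : ℕ) : ZMod n) = i - j - 1 := natCast_val_zmod _
    have hs_lt : s + 1 < n := by
      have h1 : s < n := ZMod.val_lt _
      rcases Nat.lt_or_ge (s+1) n with h | h
      · exact h
      · exfalso
        have hsn : s = n - 1 := by omega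
        have : ((s : ℕ) : ZMod n) = -1 := by rw [hsn, zmod_cast_pred (by omega : 1 ≤ n)]
        rw [hs_cast] at this
        exact hji (by linear_combination -this)
    have e1 : (arcList f i)[s]'(by simp [arcList_length]; omega) = f (j + 1) := by
      rw [arcList_getElem f i s (by omega), hs_cast]
      congr 1
      ring
    have e2 : (arcList f i)[s+1]'(by simp [arcList_length]; omega) = f j := by
      rw [arcList_getElem f i (s+1) hs_lt]
      congr 1
      push_cast [hs_cast]
      ring
    calc X'.pathStrength (arcList f i)
        ≤ X'.υ ((arcList f i)[s]'(by simp [arcList_length]; omega))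
            ((arcList f i)[s+1]'(by simp [arcList_length]; omega)) :=
          X'.pathStrength_le _ s (by simp [arcList_length]; omega)
      _ = X.υ (f (j+1)) (f j) := by
          rw [e1, e2]
          exact X.deleteEdge_υ_of_ne (pair_ne_deleted hn hji f)
      _ = X.υ a b := hjm
  · -- m ≤ pathStrength : every edge of the arc has weight ≥ m
    refine X'.le_pathStrength _ (arcList f i) (by rw [arcList_length]; omega) ?_
    intro t ht
    rw [arcList_length] at ht
    obtain ⟨k, hk, g1, g2, g3, g4⟩ := arc_consec hn hf i t ht
    rw [show (arcList f i)[t] = f (k+1) from g1, show (arcList f i)[t+1] = f k from g2, g3]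
    exact hmin _ _ g4

lemma conn_deleteEdge_le (hn : 3 ≤ n)
    (hf : ∀ x y, 0 < X.υ x y ↔ ∃ i : ZMod n, (x = f i ∧ y = f (i + 1)) ∨ (x = f (i + 1) ∧ y = f i))
    (i j : ZMod n) (hji : j ≠ i) :
    (X.deleteEdge (f i) (f (i + 1))).conn (f i) (f (i + 1)) ≤ X.υ (f (j+1)) (f j) := by
  have hNZ : NeZero n := ⟨by omega⟩
  set X' := X.deleteEdge (f i) (f (i + 1)) with hX'
  have hS : {s | ∃ l, X'.IsPath (f i) (f (i+1)) l ∧ s = X'.pathStrength l}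
      = {X'.pathStrength (arcList f i)} := by
    ext s
    simp only [Set.mem_setOf_eq, Set.mem_singleton_iff]
    constructor
    · rintro ⟨l, hl, rfl⟩
      rw [path_eq_arc hn hf i hl]
    · intro h
      exact ⟨arcList f i, arc_isPath hn hf i, h⟩
  have hconn : X'.conn (f i) (f (i+1)) = X'.pathStrength (arcList f i) := by
    rw [FuzzyGraph.conn, hS, csSup_singleton]
  rw [hconn]
  set s := (i - j - 1).val with hsdef
  have hs_cast : ((s : ℕ) : ZMod n) = i - j - 1 := natCast_val_zmod _
  have hs_lt : s + 1 < n := by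
    have h1 : s < n := ZMod.val_lt _
    rcases Nat.lt_or_ge (s+1) n with h | h
    · exact h
    · exfalso
      have hsn : s = n - 1 := by omega
      have : ((s : ℕ) : ZMod n) = -1 := by rw [hsn, zmod_cast_pred (by omega : 1 ≤ n)]
      rw [hs_cast] at this
      exact hji (by linear_combination -this)
  have e1 : (arcList f i)[s]'(by simp [arcList_length]; omega) = f (j + 1) := by
    rw [arcList_getElem f i s (by omega), hs_cast]
    congr 1
    ring
  have e2 : (arcList f i)[s+1]'(by simp [arcList_length]; omega) = f j := by
    rw [arcList_getElem f i (s+1) hs_lt]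
    congr 1
    push_cast [hs_cast]
    ring
  calc X'.pathStrength (arcList f i)
      ≤ X'.υ ((arcList f i)[s]'(by simp [arcList_length]; omega))
          ((arcList f i)[s+1]'(by simp [arcList_length]; omega)) :=
        X'.pathStrength_le _ s (by simp [arcList_length]; omega)
    _ = X.υ (f (j+1)) (f j) := by
        rw [e1, e2]
        exact X.deleteEdge_υ_of_ne (pair_ne_deleted hn hji f)

def revEquiv (n : ℕ) (c : ZMod n) : ZMod n ≃ ZMod n where
  toFun t := c - t
  invFun t := c - t
  left_inv t := by simp
  right_inv t := by simp

lemma hf_rev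
    (hf : ∀ x y, 0 < X.υ x y ↔ ∃ i : ZMod n, (x = f i ∧ y = f (i + 1)) ∨ (x = f (i + 1) ∧ y = f i))
    (c : ZMod n) :
    ∀ x y, 0 < X.υ x y ↔ ∃ t : ZMod n,
      (x = ((revEquiv n c).trans f) t ∧ y = ((revEquiv n c).trans f) (t + 1)) ∨
      (x = ((revEquiv n c).trans f) (t + 1) ∧ y = ((revEquiv n c).trans f) t) := by
  intro x y
  rw [hf x y]
  simp only [Equiv.trans_apply, revEquiv, Equiv.coe_fn_mk]
  constructor
  · rintro ⟨j, hj⟩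
    refine ⟨c - j - 1, ?_⟩
    have e1 : c - (c - j - 1) = j + 1 := by ring
    have e2 : c - (c - j - 1 + 1) = j := by ring
    rw [e1, e2]
    tauto
  · rintro ⟨t, (⟨hx, hy⟩ | ⟨hx, hy⟩)⟩
    · refine ⟨c - t - 1, Or.inr ⟨?_, ?_⟩⟩
      · rw [hx]; congr 1; ring
      · rw [hy]; congr 1; ring
    · refine ⟨c - t - 1, Or.inl ⟨?_, ?_⟩⟩
      · rw [hx]; congr 1; ring
      · rw [hy]; congr 1; ring

lemma edge_conn_eq (hn : 3 ≤ n)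
    (hf : ∀ x y, 0 < X.υ x y ↔ ∃ i : ZMod n, (x = f i ∧ y = f (i + 1)) ∨ (x = f (i + 1) ∧ y = f i))
    {a b c d : V} (hab : 0 < X.υ a b) (hcd : 0 < X.υ c d)
    (hne : s(a, b) ≠ s(c, d)) (habcd : X.υ a b = X.υ c d)
    (hmin : ∀ x y, 0 < X.υ x y → X.υ a b ≤ X.υ x y) :
    ∀ x y, 0 < X.υ x y → (X.deleteEdge x y).conn x y = X.υ a b := by
  intro x y hxy
  obtain ⟨j, hj⟩ := (hf x y).mp hxy
  rcases hj with ⟨rfl, rfl⟩ | ⟨rfl, rfl⟩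
  · exact conn_deleteEdge hn hf hab hcd hne habcd hmin j
  · have hg := hf_rev hf (j + 1)
    have hc := conn_deleteEdge hn hg hab hcd hne habcd hmin 0
    have e0 : ((revEquiv n (j+1)).trans f) 0 = f (j + 1) := by
      simp [revEquiv]
    have e1 : ((revEquiv n (j+1)).trans f) (0 + 1) = f j := by
      simp only [Equiv.trans_apply, revEquiv, Equiv.coe_fn_mk]
      congr 1
      ring
    rw [e0, e1] at hc
    exact hc

lemma strong_iff_pos (hn : 3 ≤ n)
    (hf : ∀ x y, 0 < X.υ x y ↔ ∃ i : ZMod n, (x = f i ∧ y = f (i + 1)) ∨ (x = f (i + 1) ∧ y = f i))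
    {a b c d : V} (hab : 0 < X.υ a b) (hcd : 0 < X.υ c d)
    (hne : s(a, b) ≠ s(c, d)) (habcd : X.υ a b = X.υ c d)
    (hmin : ∀ x y, 0 < X.υ x y → X.υ a b ≤ X.υ x y) :
    ∀ x y, X.StrongEdge x y ↔ 0 < X.υ x y := by
  intro x y
  constructor
  · exact fun h => h.1
  · intro h
    refine ⟨h, ?_⟩
    rw [edge_conn_eq hn hf hab hcd hne habcd hmin x y h]
    exact hmin x y h

lemma sds_card_lower (hn : 3 ≤ n)
    (hf : ∀ x y, 0 < X.υ x y ↔ ∃ i : ZMod n, (x = f i ∧ y = f (i + 1)) ∨ (x = f (i + 1) ∧ y = f i))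
    (hstrong : ∀ x y, X.StrongEdge x y ↔ 0 < X.υ x y)
    {D : Finset V} (hD : X.IsSDS D) : n ≤ 3 * D.card := by
  have hNZ : NeZero n := ⟨by omega⟩
  have hcard : Fintype.card V = n := by rw [← Fintype.card_congr f, ZMod.card n]
  have cover : (Finset.univ : Finset V) ⊆
      D.biUnion (fun v => {v, f (f.symm v + 1), f (f.symm v - 1)}) := by
    intro v _
    by_cases hv : v ∈ D
    · exact Finset.mem_biUnion.mpr ⟨v, hv, by simp⟩
    · obtain ⟨u, hu, hsu⟩ := hD v hv
      have hpos := (hstrong u v).mp hsu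
      obtain ⟨j, hj⟩ := (hf u v).mp hpos
      refine Finset.mem_biUnion.mpr ⟨u, hu, ?_⟩
      rcases hj with ⟨h1, h2⟩ | ⟨h1, h2⟩
      · have hsymm : f.symm u = j := by rw [h1]; simp
        simp only [Finset.mem_insert, Finset.mem_singleton]
        right; left
        rw [hsymm, h2]
      · have hsymm : f.symm u = j + 1 := by rw [h1]; simp
        simp only [Finset.mem_insert, Finset.mem_singleton]
        right; right
        rw [hsymm, h2]
        congr 1
        ring
  have h1 : Fintype.card V ≤
      ∑ v ∈ D, ({v, f (f.symm v + 1), f (f.symm v - 1)} : Finset V).card := by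
    calc Fintype.card V = (Finset.univ : Finset V).card := (Finset.card_univ).symm
      _ ≤ (D.biUnion (fun v => {v, f (f.symm v + 1), f (f.symm v - 1)})).card :=
          Finset.card_le_card cover
      _ ≤ _ := Finset.card_biUnion_le
  have h2 : ∑ v ∈ D, ({v, f (f.symm v + 1), f (f.symm v - 1)} : Finset V).card ≤
      ∑ _v ∈ D, 3 := by
    refine Finset.sum_le_sum ?_
    intro v _
    calc ({v, f (f.symm v + 1), f (f.symm v - 1)} : Finset V).card
        ≤ ({f (f.symm v + 1), f (f.symm v - 1)} : Finset V).card + 1 :=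
          Finset.card_insert_le _ _
      _ ≤ (({f (f.symm v - 1)} : Finset V).card + 1) + 1 := by
          exact Nat.add_le_add_right (Finset.card_insert_le _ _) 1
      _ = 3 := by simp
  rw [Finset.sum_const, smul_eq_mul] at h2
  omega

lemma sds_construct (hn : 3 ≤ n)
    (hf : ∀ x y, 0 < X.υ x y ↔ ∃ i : ZMod n, (x = f i ∧ y = f (i + 1)) ∨ (x = f (i + 1) ∧ y = f i))
    (hstrong : ∀ x y, X.StrongEdge x y ↔ 0 < X.υ x y)
    (u : V) {k : ℕ} (hk1 : n ≤ 3 * k) (hk2 : 3 * k ≤ n + 2) :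
    ∃ D : Finset V, X.IsSDS D ∧ u ∈ D ∧ D.card = k := by
  have hNZ : NeZero n := ⟨by omega⟩
  set D : Finset V := (Finset.range k).image (fun t => f (f.symm u + ((3*t : ℕ) : ZMod n)))
    with hD
  have hkpos : 1 ≤ k := by omega
  have hmemD : ∀ t : ℕ, t < k → f (f.symm u + ((3*t : ℕ) : ZMod n)) ∈ D := by
    intro t ht
    exact Finset.mem_image.mpr ⟨t, Finset.mem_range.mpr ht, rfl⟩
  refine ⟨D, ?_, ?_, ?_⟩
  · -- dominating
    intro v hv
    set z := (f.symm v - f.symm u).val with hzdef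
    have hz : ((z : ℕ) : ZMod n) = f.symm v - f.symm u := natCast_val_zmod _
    have hzlt : z < n := ZMod.val_lt _
    have htk : z / 3 < k := by omega
    have hr : z % 3 = 0 ∨ z % 3 = 1 ∨ z % 3 = 2 := by omega
    rcases hr with hr | hr | hr
    · exfalso
      apply hv
      have h30 : (3 * (z / 3) : ℕ) = z := by omega
      have : f (f.symm u + ((3*(z/3) : ℕ) : ZMod n)) = v := by
        rw [h30, hz]
        have : f.symm u + (f.symm v - f.symm u) = f.symm v := by ring
        rw [this]; simp
      rw [← this]
      exact hmemD _ htk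
    · refine ⟨f (f.symm u + ((3*(z/3) : ℕ) : ZMod n)), hmemD _ htk, ?_⟩
      rw [hstrong]
      refine (hf _ _).mpr ⟨f.symm u + ((3*(z/3) : ℕ) : ZMod n), Or.inl ⟨rfl, ?_⟩⟩
      have hcast : ((z : ℕ) : ZMod n) = ((3*(z/3) : ℕ) : ZMod n) + 1 := by
        have h31 : (z : ℕ) = 3*(z/3) + 1 := by omega
        conv_lhs => rw [h31]
        push_cast; ring
      have : f.symm u + ((3*(z/3) : ℕ) : ZMod n) + 1 = f.symm v := by
        linear_combination hz - hcast
      rw [this]; simp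
    · have hmem2 : f (f.symm u + ((3*(z/3) + 3 : ℕ) : ZMod n)) ∈ D := by
        by_cases hlt : z / 3 + 1 < k
        · have : (3 * (z/3 + 1) : ℕ) = 3*(z/3) + 3 := by ring
          rw [← this]
          exact hmemD _ hlt
        · -- z/3 + 1 = k, and then n = 3k and the element is u's t = 0 element
          have hzk : z / 3 + 1 = k := by omega
          have hn3k : n = 3 * k := by omega
          have hcast0 : ((3*(z/3) + 3 : ℕ) : ZMod n) = ((3*(0:ℕ) : ℕ) : ZMod n) := by
            have : (3*(z/3) + 3 : ℕ) = n := by omega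
            rw [this]
            simp [ZMod.natCast_self]
          rw [hcast0]
          exact hmemD 0 (by omega)
      refine ⟨_, hmem2, ?_⟩
      rw [hstrong]
      refine (hf _ _).mpr ⟨f.symm v, Or.inr ⟨?_, by simp⟩⟩
      congr 1
      have hcast : ((3*(z/3) + 3 : ℕ) : ZMod n) = ((z : ℕ) : ZMod n) + 1 := by
        have : (3*(z/3) + 3 : ℕ) = z + 1 := by omega
        rw [this]; push_cast; ring
      rw [hcast, hz]; ring
  · -- u ∈ D
    have := hmemD 0 (by omega)
    simpa using this
  · -- card
    rw [hD]
    rw [Finset.card_image_of_injOn, Finset.card_range]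
    intro t1 h1 t2 h2 he
    simp only [Finset.coe_range, Set.mem_Iio] at h1 h2
    have := f.injective he
    have h3 : ((3*t1 : ℕ) : ZMod n) = ((3*t2 : ℕ) : ZMod n) := by
      have := add_left_cancel this
      exact this
    have := zmod_cast_inj (by omega : 3*t1 < n) (by omega : 3*t2 < n) h3
    omega

end Cycle

/-- For a β-saturated fuzzy cycle on n vertices whose β-strong
edges all have weight w, SDI(X) = n · ⌈n/3⌉ · w. -/
theorem FuzzyGraph.SDI_of_betaSaturated_fuzzyCycle {V : Type*} [Fintype V] [DecidableEq V]
    (X : FuzzyGraph V) (hX : X.IsFuzzyCycle)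
    (hsat : ∀ v : V, ∃ u : V, X.BetaStrong v u) (w : ℝ)
    (hw : ∀ a b : V, X.BetaStrong a b → X.υ a b = w) :
    X.SDI = (Fintype.card V : ℝ) * (⌈(Fintype.card V : ℝ) / 3⌉₊ : ℝ) * w := by
  obtain ⟨⟨n, hn, f, hf⟩, a, b, c, d, hab, hcd, hne, habcd, hmin⟩ := hX
  have hNZ : NeZero n := ⟨by omega⟩
  obtain ⟨c, d, hcd, habcd, hne⟩ :
      ∃ c d : V, 0 < X.υ c d ∧ X.υ a b = X.υ c d ∧ s(a, b) ≠ s(c, d) := by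
    by_contra hcon
    push_neg at hcon
    obtain ⟨ia, hia⟩ := (hf a b).mp hab
    have hm : X.υ (f (ia + 1)) (f ia) = X.υ a b := by
      rcases hia with ⟨rfl, rfl⟩ | ⟨rfl, rfl⟩
      · rw [X.symm]
      · rfl
    have h10 : (1 : ZMod n) ≠ 0 := by
      intro h
      have h' : ((1 : ℕ) : ZMod n) = ((0 : ℕ) : ZMod n) := by push_cast; exact h
      have := zmod_cast_inj (by omega) (by omega) h'
      omega
    have h20 := zmod_two_ne_zero hn
    obtain ⟨u, hu⟩ := hsat (f (ia + 2))
    have hvne : f (ia + 2) ≠ a ∧ f (ia + 2) ≠ b := by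
      have n1 : f (ia + 2) ≠ f ia := fun h => h20 (by
        have := f.injective h
        linear_combination this)
      have n2 : f (ia + 2) ≠ f (ia + 1) := fun h => h10 (by
        have := f.injective h
        linear_combination this)
      rcases hia with ⟨rfl, rfl⟩ | ⟨rfl, rfl⟩
      · exact ⟨n1, n2⟩
      · exact ⟨n2, n1⟩
    have hgt : X.υ a b < X.υ (f (ia + 2)) u := by
      refine lt_of_le_of_ne (hmin _ _ hu.1) ?_
      intro h
      have hs := hcon _ _ hu.1 h
      have hmem : f (ia + 2) ∈ s(a, b) := by rw [hs]; exact Sym2.mem_mk_left _ _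
      rcases Sym2.mem_iff.mp hmem with h' | h'
      · exact hvne.1 h'
      · exact hvne.2 h'
    have hle : (X.deleteEdge (f (ia + 2)) u).conn (f (ia + 2)) u ≤ X.υ a b := by
      obtain ⟨j, hj⟩ := (hf _ _).mp hu.1
      rcases hj with ⟨h1, h2⟩ | ⟨h1, h2⟩
      · rw [h1, h2, ← hm]
        refine conn_deleteEdge_le hn hf j ia ?_
        intro h
        apply h20
        have := f.injective h1
        linear_combination this - h
      · have hg := hf_rev hf (j + 1)
        have hc := conn_deleteEdge_le hn hg 0 (j - ia) ?_
        · have e0 : ((revEquiv n (j+1)).trans f) 0 = f (j + 1) := by simp [revEquiv]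
          have e1 : ((revEquiv n (j+1)).trans f) (0 + 1) = f j := by
            simp only [Equiv.trans_apply, revEquiv, Equiv.coe_fn_mk]; congr 1; ring
          have e2 : ((revEquiv n (j+1)).trans f) (j - ia + 1) = f ia := by
            simp only [Equiv.trans_apply, revEquiv, Equiv.coe_fn_mk]; congr 1; ring
          have e3 : ((revEquiv n (j+1)).trans f) (j - ia) = f (ia + 1) := by
            simp only [Equiv.trans_apply, revEquiv, Equiv.coe_fn_mk]; congr 1; ring
          rw [e0, e1, e2, e3, X.symm (f ia), hm] at hc
          rw [h1, h2]
          exact hc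
        · intro h
          apply h10
          have := f.injective h1
          linear_combination this + h
    linarith [hu.2, hgt, hle]
  have hcard : Fintype.card V = n := by rw [← Fintype.card_congr f, ZMod.card n]
  have hstrong := strong_iff_pos hn hf hab hcd hne habcd hmin
  have hbeta_ab : X.BetaStrong a b :=
    ⟨hab, (edge_conn_eq hn hf hab hcd hne habcd hmin a b hab).symm⟩
  have hmw : X.υ a b = w := hw a b hbeta_ab
  have hwpos : 0 < w := hmw ▸ hab
  have hminInc : ∀ v, X.minInc v = w := by
    intro v
    obtain ⟨u, hu⟩ := hsat v
    have hust : X.StrongEdge v u := ⟨hu.1, le_of_eq hu.2.symm⟩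
    have huw : X.υ v u = w := hw v u hu
    rw [FuzzyGraph.minInc]
    apply le_antisymm
    · refine csInf_le ⟨w, ?_⟩ ⟨u, hust, huw.symm⟩
      rintro x ⟨e, he, rfl⟩
      rw [← hmw]
      exact hmin v e he.1
    · refine le_csInf ⟨X.υ v u, u, hust, rfl⟩ ?_
      rintro x ⟨e, he, rfl⟩
      rw [← hmw]
      exact hmin v e he.1
  have hweight : ∀ S : Finset V, X.weight S = S.card * w := by
    intro S
    rw [FuzzyGraph.weight, Finset.sum_congr rfl (fun v _ => hminInc v),
      Finset.sum_const, nsmul_eq_mul]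
  set k := ⌈(n : ℝ) / 3⌉₊ with hk
  have hk1 : n ≤ 3 * k := by
    have h1 := Nat.le_ceil ((n : ℝ) / 3)
    have h2 : (n : ℝ) ≤ 3 * k := by rw [← hk] at h1; linarith
    exact_mod_cast h2
  have hk2 : 3 * k ≤ n + 2 := by
    have h := Nat.ceil_lt_add_one (by positivity : (0:ℝ) ≤ (n : ℝ) / 3)
    rw [← hk] at h
    have h2 : (3 * k : ℝ) < (n : ℝ) + 3 := by linarith
    have h3 : 3 * k < n + 3 := by exact_mod_cast h2
    omega
  have hsd : ∀ u : V, X.sd u = (k : ℝ) * w := by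
    intro u
    obtain ⟨D₀, hD₀, huD₀, hcardD₀⟩ := sds_construct hn hf hstrong u hk1 hk2
    have hD₀min : X.IsMinimalSDS D₀ := by
      refine ⟨hD₀, ?_⟩
      intro a' ha' hSDS'
      have hlow := sds_card_lower hn hf hstrong hSDS'
      rw [Finset.card_erase_of_mem ha', hcardD₀] at hlow
      omega
    have hlb : ∀ x ∈ {wt | ∃ D : Finset V, X.IsMinimalSDS D ∧ u ∈ D ∧ wt = X.weight D},
        (k : ℝ) * w ≤ x := by
      rintro x ⟨D, hDmin, _, rfl⟩
      rw [hweight]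
      have hge := sds_card_lower hn hf hstrong hDmin.1
      have hkD : k ≤ D.card := by omega
      have hkD' : (k : ℝ) ≤ (D.card : ℝ) := by exact_mod_cast hkD
      exact mul_le_mul_of_nonneg_right hkD' (le_of_lt hwpos)
    rw [FuzzyGraph.sd]
    apply le_antisymm
    · exact csInf_le ⟨(k:ℝ)*w, hlb⟩ ⟨D₀, hD₀min, huD₀, by rw [hweight, hcardD₀]⟩
    · exact le_csInf ⟨_, D₀, hD₀min, huD₀, rfl⟩ hlb
  rw [FuzzyGraph.SDI, Finset.sum_congr rfl (fun u _ => hsd u),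
    Finset.sum_const, nsmul_eq_mul, Finset.card_univ, hcard, ← hk]
  ring
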